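/- Let X and Y be topological spaces and f : X → Y a continuous map. Then f is downwards open — meaning: for every ultrafilter 𝔶 on Y, every x ∈ X, from 𝔶 → y for some y with y ≤ f(x) (in the specialization preorder where opens are down-closed) it follows that there exists an ultrafilter 𝔵 on X with 𝔵 → x and 𝔶 (U≤) f(𝔵) (i.e., ↓B ∈ 𝔶 for every B in the pushforward f(𝔵)) — if and only if for every open subset A ⊆ X, the down-closure ↓f(A) is open in Y. -/

import Mathlib

open Filter Set Topology

/-- A continuous map `f : X → Y` is downwards open (with respect to the specialization
preorders, taken so that opens are down-closed) iff the down-closure of the image of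
every open subset of `X` is open in `Y`. -/
theorem stmt14 {X Y : Type*} [TopologicalSpace X] [TopologicalSpace Y]
    (f : X → Y) (hf : Continuous f) :
    (∀ (𝔶 : Ultrafilter Y) (x : X) (y : Y),
        (∀ U : Set Y, IsOpen U → y ∈ U → U ∈ 𝔶) →
        (∀ U : Set Y, IsOpen U → f x ∈ U → y ∈ U) →
        ∃ 𝔵 : Ultrafilter X,
          (∀ U : Set X, IsOpen U → x ∈ U → U ∈ 𝔵) ∧
          ∀ B ∈ Ultrafilter.map f 𝔵,
            {z : Y | ∃ b ∈ B, ∀ U : Set Y, IsOpen U → b ∈ U → z ∈ U} ∈ 𝔶) ↔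
      (∀ A : Set X, IsOpen A →
        IsOpen {z : Y | ∃ a ∈ A, ∀ U : Set Y, IsOpen U → f a ∈ U → z ∈ U}) := by
  set DY : Set Y → Set Y :=
    fun T => {z : Y | ∃ b ∈ T, ∀ U : Set Y, IsOpen U → b ∈ U → z ∈ U} with hDY
  have hmono : ∀ {S T : Set Y}, S ⊆ T → DY S ⊆ DY T := by
    rintro S T h z ⟨b, hb, hz⟩; exact ⟨b, h hb, hz⟩
  have himg : ∀ A : Set X,
      {z : Y | ∃ a ∈ A, ∀ U : Set Y, IsOpen U → f a ∈ U → z ∈ U} = DY (f '' A) := by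
    intro A; ext z; simp [hDY]
  constructor
  · intro H A hA
    rw [himg, isOpen_iff_ultrafilter]
    rintro z ⟨b, ⟨a, ha, rfl⟩, hzb⟩ 𝔶 h𝔶
    obtain ⟨𝔵, hx1, hx2⟩ := H 𝔶 a z
      (fun U hU hzU => h𝔶 (hU.mem_nhds hzU)) hzb
    have hAmem : f '' A ∈ Ultrafilter.map f 𝔵 := by
      rw [Ultrafilter.mem_map]
      exact Filter.mem_of_superset (hx1 A hA ha) (Set.subset_preimage_image f A)
    exact hx2 (f '' A) hAmem
  · intro H 𝔶 x y hy hyx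
    have hDYopen : ∀ A : Set X, IsOpen A → IsOpen (DY (f '' A)) := by
      intro A hA; rw [← himg]; exact H A hA
    have hempty : DY (∅ : Set Y) = ∅ := by simp [hDY]
    let C : Filter X :=
      { sets := {S | DY (f '' Sᶜ) ∉ 𝔶}
        univ_sets := by
          simp only [Set.mem_setOf_eq, Set.compl_univ, Set.image_empty, hempty]
          exact Filter.empty_notMem (𝔶 : Filter Y)
        sets_of_superset := by
          intro S T hS hST hT
          exact hS (Filter.mem_of_superset hT
            (hmono (Set.image_mono (f := f) (Set.compl_subset_compl.mpr hST))))
        inter_sets := by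
          intro S T hS hT hST
          have hsub : DY (f '' (S ∩ T)ᶜ) ⊆ DY (f '' Sᶜ) ∪ DY (f '' Tᶜ) := by
            rw [Set.compl_inter]
            rintro z ⟨b, hb, hz⟩
            rw [Set.image_union] at hb
            rcases hb with hb | hb
            · exact Or.inl ⟨b, hb, hz⟩
            · exact Or.inr ⟨b, hb, hz⟩
          rcases (Ultrafilter.union_mem_iff).mp
            (Filter.mem_of_superset hST hsub) with h | h
          · exact hS h
          · exact hT h }
    have hCmem : ∀ S : Set X, S ∈ C ↔ DY (f '' Sᶜ) ∉ 𝔶 := fun _ => Iff.rfl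
    have hNB : Filter.NeBot (𝓝 x ⊓ C) := by
      rw [Filter.inf_neBot_iff]
      intro S hS T hT
      by_contra hne
      rw [Set.not_nonempty_iff_eq_empty] at hne
      obtain ⟨U, hUS, hU, hxU⟩ := mem_nhds_iff.mp hS
      have hUT : U ⊆ Tᶜ := fun u hu hut =>
        Set.eq_empty_iff_forall_notMem.mp hne u ⟨hUS hu, hut⟩
      have hyU : y ∈ DY (f '' U) := ⟨f x, ⟨x, hxU, rfl⟩, hyx⟩
      have hmemY : DY (f '' U) ∈ 𝔶 := hy _ (hDYopen U hU) hyU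
      exact hT (Filter.mem_of_superset hmemY (hmono (Set.image_mono (f := f) hUT)))
    refine ⟨Ultrafilter.of (𝓝 x ⊓ C), ?_, ?_⟩
    · intro U hU hxU
      exact Ultrafilter.of_le _ (Filter.mem_inf_of_left (hU.mem_nhds hxU))
    · intro B hB
      by_contra hDB
      have h1 : DY (f '' (f ⁻¹' B)) ∉ 𝔶 := fun h =>
        hDB (Filter.mem_of_superset h (hmono (Set.image_preimage_subset f B)))
      have h2 : (f ⁻¹' B)ᶜ ∈ C := by
        rw [hCmem, compl_compl]; exact h1
      have h3 : (f ⁻¹' B)ᶜ ∈ Ultrafilter.of (𝓝 x ⊓ C) :=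
        Ultrafilter.of_le _ (Filter.mem_inf_of_right h2)
      exact (Ultrafilter.compl_notMem_iff.mpr hB) h3
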